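/- Let n = 2, K₀ ≥ 2, K ≥ 6K₀ and α > 0. Then ℛ² ⊆ {y ∈ ℝ² : |y| < 7αK}; that is, every y ∈ 𝔻 which does not belong to ℛ⁰ ∪ ℛ¹ satisfies |y| < 7αK. -/

import Mathlib

open MeasureTheory

noncomputable section

/-- The Euclidean norm `|y|` of `y ∈ ℝⁿ`. -/
def eNorm {n : ℕ} (y : Fin n → ℝ) : ℝ := Real.sqrt (∑ i, y i ^ 2)

/-- The Euclidean norm `|k|` of an integer vector `k ∈ ℤⁿ`. -/
def eNormZ {n : ℕ} (k : Fin n → ℤ) : ℝ := Real.sqrt (∑ i, (k i : ℝ) ^ 2)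

/-- `|k|₁ := ∑ᵢ |kᵢ|`, as a real number. -/
def norm1 {n : ℕ} (k : Fin n → ℤ) : ℝ := ∑ i, |(k i : ℝ)|

/-- `ℤⁿ_*`: nonzero integer vectors whose first nonzero component is positive. -/
def ZnStar {n : ℕ} (k : Fin n → ℤ) : Prop :=
  k ≠ 0 ∧ ∀ j, (∀ i, i < j → k i = 0) → 0 ≤ k j

/-- `𝒢ⁿ`: generators of one-dimensional maximal lattices, i.e. `k ∈ ℤⁿ_*` with
`gcd (k₁, …, kₙ) = 1`. -/
def Gen {n : ℕ} (k : Fin n → ℤ) : Prop :=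
  ZnStar k ∧ Finset.univ.gcd (fun i => (k i).natAbs) = 1

/-- `𝒢ⁿ_K := {k ∈ 𝒢ⁿ : |k|₁ ≤ K}`. -/
def GenK {n : ℕ} (K : ℝ) (k : Fin n → ℤ) : Prop := Gen k ∧ norm1 k ≤ K

/-- The dot product `y · k` of `y ∈ ℝⁿ` with an integer vector `k`. -/
def dotZ {n : ℕ} (y : Fin n → ℝ) (k : Fin n → ℤ) : ℝ := ∑ i, y i * (k i : ℝ)

/-- The orthogonal projection `π_k^⊥ y := y − ((y·k)/|k|²) k` of `y` onto the orthogonal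
complement of `k`. -/
def perpZ {n : ℕ} (y : Fin n → ℝ) (k : Fin n → ℤ) : Fin n → ℝ :=
  y - ((dotZ y k) / (∑ i, (k i : ℝ) ^ 2)) • fun i => (k i : ℝ)

/-- The open unit ball `𝔻 := {y ∈ ℝⁿ : |y| < 1}`. -/
def unitBall (n : ℕ) : Set (Fin n → ℝ) := {y | eNorm y < 1}

/-- The nonresonant set `ℛ⁰ := {y ∈ 𝔻 : |y·k| > α/2 ∀ k ∈ 𝒢ⁿ_{K₀}}`. -/
def R0 (n : ℕ) (α K₀ : ℝ) : Set (Fin n → ℝ) :=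
  {y | y ∈ unitBall n ∧ ∀ k : Fin n → ℤ, GenK K₀ k → α / 2 < |dotZ y k|}

/-- The simply-resonant set
`ℛ¹_k := {y ∈ 𝔻 : |y·k| < α, |π_k^⊥ y·ℓ| > 3αK/|k| ∀ ℓ ∈ 𝒢ⁿ_K \ ℤk}`. -/
def R1k (n : ℕ) (α K : ℝ) (k : Fin n → ℤ) : Set (Fin n → ℝ) :=
  {y | y ∈ unitBall n ∧ |dotZ y k| < α ∧
    ∀ ℓ : Fin n → ℤ, GenK K ℓ → (¬ ∃ m : ℤ, ℓ = m • k) →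
      3 * α * K / eNormZ k < |dotZ (perpZ y k) ℓ|}

/-- `ℛ¹ := ⋃_{k ∈ 𝒢ⁿ_{K₀}} ℛ¹_k`. -/
def R1 (n : ℕ) (α K₀ K : ℝ) : Set (Fin n → ℝ) :=
  ⋃ k ∈ {k : Fin n → ℤ | GenK K₀ k}, R1k n α K k

/-- The (neighborhood of) double resonances `ℛ² := 𝔻 \ (ℛ⁰ ∪ ℛ¹)`. -/
def R2 (n : ℕ) (α K₀ K : ℝ) : Set (Fin n → ℝ) :=
  unitBall n \ (R0 n α K₀ ∪ R1 n α K₀ K)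

end

/-- For `n = 2`, `K₀ ≥ 2`, `K ≥ 6K₀` and `α > 0`, one has
`ℛ² ⊆ {y ∈ ℝ² : |y| < 7αK}`: every `y ∈ 𝔻` not in `ℛ⁰ ∪ ℛ¹` satisfies `|y| < 7αK`. -/
theorem R2_subset_ball_two_dim (α K₀ K : ℝ) (hα : 0 < α) (hK₀ : 2 ≤ K₀) (hK : 6 * K₀ ≤ K) :
    R2 2 α K₀ K ⊆ {y : Fin 2 → ℝ | eNorm y < 7 * α * K} := by
  intro y hy
  obtain ⟨hyD, hnot⟩ := hy
  have hK12 : (12 : ℝ) ≤ K := by linarith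
  -- extract k from failure of R0
  have h0 : ∃ k : Fin 2 → ℤ, GenK K₀ k ∧ |dotZ y k| ≤ α / 2 := by
    by_contra h
    push_neg at h
    exact hnot (Or.inl ⟨hyD, fun k hk => h k hk⟩)
  obtain ⟨k, hk, hkα⟩ := h0
  have hkne : k ≠ 0 := hk.1.1.1
  have hgcd : Int.gcd (k 0) (k 1) = 1 := by
    have h := hk.1.2
    rw [show (Finset.univ : Finset (Fin 2)) = {0, 1} from rfl] at h
    simp [Finset.gcd_insert, Finset.gcd_singleton] at h
    exact h
  set S : ℝ := (k 0 : ℝ) ^ 2 + (k 1 : ℝ) ^ 2 with hSdef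
  clear_value S
  have hS1 : (1 : ℝ) ≤ S := by
    have hex : k 0 ≠ 0 ∨ k 1 ≠ 0 := by
      by_contra hc
      push_neg at hc
      apply hkne
      funext i
      fin_cases i <;> simp [hc.1, hc.2]
    rcases hex with h | h
    · have h1 : (1 : ℤ) ≤ (k 0) ^ 2 := by nlinarith [Int.one_le_abs h, sq_abs (k 0), abs_nonneg (k 0)]
      have h1' : (1 : ℝ) ≤ (k 0 : ℝ) ^ 2 := by exact_mod_cast h1
      nlinarith [sq_nonneg ((k 1 : ℝ))]
    · have h1 : (1 : ℤ) ≤ (k 1) ^ 2 := by nlinarith [Int.one_le_abs h, sq_abs (k 1), abs_nonneg (k 1)]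
      have h1' : (1 : ℝ) ≤ (k 1 : ℝ) ^ 2 := by exact_mod_cast h1
      nlinarith [sq_nonneg ((k 0 : ℝ))]
  have hSpos : (0 : ℝ) < S := lt_of_lt_of_le one_pos hS1
  have hSsum : (∑ i, ((k i : ℝ)) ^ 2) = S := by
    simp [Fin.sum_univ_two, hSdef]
  have heNZ : eNormZ k = Real.sqrt S := by
    rw [eNormZ, hSsum]
  have hsqS : 0 < Real.sqrt S := Real.sqrt_pos.mpr hSpos
  -- extract ℓ from failure of R1k
  have h1 : ∃ ℓ : Fin 2 → ℤ, GenK K ℓ ∧ (¬ ∃ m : ℤ, ℓ = m • k) ∧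
      |dotZ (perpZ y k) ℓ| ≤ 3 * α * K / eNormZ k := by
    by_contra h
    push_neg at h
    refine hnot (Or.inr ?_)
    exact Set.mem_biUnion hk ⟨hyD, lt_of_le_of_lt hkα (by linarith), fun ℓ hℓ hm => h ℓ hℓ (not_exists.mp hm)⟩
  obtain ⟨ℓ, hℓ, hℓm, hℓle⟩ := h1
  -- the determinant is a nonzero integer
  set D : ℤ := k 1 * ℓ 0 - k 0 * ℓ 1 with hDdef
  clear_value D
  have hD : D ≠ 0 := by
    intro hD0
    apply hℓm
    obtain ⟨a, b, hab⟩ := Int.isCoprime_iff_gcd_eq_one.mpr hgcd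
    rw [hDdef, sub_eq_zero] at hD0
    refine ⟨a * ℓ 0 + b * ℓ 1, ?_⟩
    funext i
    fin_cases i
    · show ℓ 0 = (a * ℓ 0 + b * ℓ 1) * k 0
      linear_combination (-(ℓ 0)) * hab + b * hD0
    · show ℓ 1 = (a * ℓ 0 + b * ℓ 1) * k 1
      linear_combination (-(ℓ 1)) * hab - a * hD0
  have hD1 : (1 : ℝ) ≤ |(D : ℝ)| := by
    have := Int.one_le_abs hD
    exact_mod_cast this
  -- compute the perpendicular dot product
  set A : ℝ := y 0 * (k 1 : ℝ) - y 1 * (k 0 : ℝ) with hAdef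
  clear_value A
  have hperp : dotZ (perpZ y k) ℓ = A * (D : ℝ) / S := by
    have hS0 : ((k 0 : ℝ) ^ 2 + (k 1 : ℝ) ^ 2) ≠ 0 := by rw [← hSdef]; exact ne_of_gt hSpos
    rw [hAdef, hDdef, hSdef]
    simp only [dotZ, perpZ, Pi.sub_apply, Pi.smul_apply, smul_eq_mul, Fin.sum_univ_two]
    push_cast
    field_simp
    ring
  -- bound |A|
  have hle : |A| * |(D : ℝ)| / S ≤ 3 * α * K / Real.sqrt S := by
    rw [hperp, heNZ] at hℓle
    calc |A| * |(D : ℝ)| / S = |A * (D : ℝ) / S| := by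
          rw [abs_div, abs_mul, abs_of_pos hSpos]
      _ ≤ 3 * α * K / Real.sqrt S := hℓle
  have hAD : |A| * |(D : ℝ)| ≤ 3 * α * K * Real.sqrt S := by
    have h' := (div_le_div_iff₀ hSpos hsqS).mp hle
    have hSS : Real.sqrt S * Real.sqrt S = S := Real.mul_self_sqrt (le_of_lt hSpos)
    refine (mul_le_mul_iff_of_pos_right hsqS).mp ?_
    calc |A| * |(D : ℝ)| * Real.sqrt S ≤ 3 * α * K * S := h'
      _ = 3 * α * K * Real.sqrt S * Real.sqrt S := by rw [mul_assoc (3 * α * K), hSS]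
  have hA : |A| ≤ 3 * α * K * Real.sqrt S := by
    refine le_trans ?_ hAD
    exact le_mul_of_one_le_right (abs_nonneg A) hD1
  have hA2 : A ^ 2 ≤ 9 * α ^ 2 * K ^ 2 * S := by
    have h3 : 0 ≤ 3 * α * K := by positivity
    have := mul_le_mul hA hA (abs_nonneg A) (by positivity)
    have hSS : Real.sqrt S * Real.sqrt S = S := Real.mul_self_sqrt (le_of_lt hSpos)
    nlinarith [sq_abs A]
  -- bound the resonant part
  have hB2 : (dotZ y k) ^ 2 ≤ α ^ 2 / 4 := by
    nlinarith [sq_abs (dotZ y k), abs_nonneg (dotZ y k)]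
  -- key identity
  have hid : (y 0 ^ 2 + y 1 ^ 2) * S = (dotZ y k) ^ 2 + A ^ 2 := by
    simp only [dotZ, Fin.sum_univ_two, hSdef, hAdef]
    ring
  have hstep : (y 0 ^ 2 + y 1 ^ 2) * S ≤ α ^ 2 / 4 + 9 * α ^ 2 * K ^ 2 * S := by
    rw [hid]; linarith [hA2, hB2]
  have hK2 : (144 : ℝ) ≤ K ^ 2 := by
    have h12 : (12 : ℝ) * 12 ≤ K * K := mul_le_mul hK12 hK12 (by norm_num) (by linarith)
    calc (144 : ℝ) = 12 * 12 := by norm_num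
      _ ≤ K * K := h12
      _ = K ^ 2 := (sq K).symm
  have hy2 : y 0 ^ 2 + y 1 ^ 2 < (7 * α * K) ^ 2 := by
    by_contra hcon
    push_neg at hcon
    have e1 := mul_le_mul_of_nonneg_right hcon hSpos.le
    have e2 : 40 * (α ^ 2 * K ^ 2) * S ≤ α ^ 2 / 4 := by linarith [e1, hstep]
    have e3 : 40 * (α ^ 2 * K ^ 2) ≤ 40 * (α ^ 2 * K ^ 2) * S :=
      le_mul_of_one_le_right (by positivity) hS1
    have e4 : α ^ 2 * 144 ≤ α ^ 2 * K ^ 2 := mul_le_mul_of_nonneg_left hK2 (sq_nonneg α)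
    have e5 : 0 < α ^ 2 := by positivity
    linarith
  have h7 : 0 < 7 * α * K := by positivity
  show eNorm y < 7 * α * K
  rw [eNorm, Fin.sum_univ_two]
  exact (Real.sqrt_lt' h7).mpr hy2
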